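/- arXiv:2108.13116 — 2 statements merged into one kernel-verified Lean document; each statement's English description precedes it below -/
import Mathlib

section
/- For $x \geq 2$ we have $\sum_{p \le x} \frac{\log p}{p} = \log x + O(1)$, where the sum runs over primes $p \le x$. -/
open Real Finset
open ArithmeticFunction

lemma swap_sum (n : ℕ) :
    ∑ m ∈ Icc 1 n, Real.log m = ∑ d ∈ Icc 1 n, Λ d * ((n / d : ℕ) : ℝ) := by
  have h1 : ∑ m ∈ Icc 1 n, Real.log m = ∑ m ∈ Icc 1 n, ∑ d ∈ m.divisors, Λ d := by
    refine Finset.sum_congr rfl fun m hm => ?_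
    exact vonMangoldt_sum.symm
  rw [h1]
  have h2 : ∀ m ∈ Icc 1 n, ∑ d ∈ m.divisors, Λ d
      = ∑ d ∈ (Icc 1 n).filter (· ∣ m), Λ d := by
    intro m hm
    simp only [mem_Icc] at hm
    apply Finset.sum_congr _ (fun _ _ => rfl)
    ext d
    simp only [Nat.mem_divisors, mem_filter, mem_Icc]
    constructor
    · rintro ⟨hd, hm0⟩
      exact ⟨⟨Nat.one_le_iff_ne_zero.2 (fun h => by simp [h] at hd; omega),
        le_trans (Nat.le_of_dvd (by omega) hd) hm.2⟩, hd⟩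
    · rintro ⟨_, hd⟩
      exact ⟨hd, by omega⟩
  rw [Finset.sum_congr rfl h2, Finset.sum_comm' (t' := Icc 1 n)
    (s' := fun d => (Icc 1 n).filter (d ∣ ·))]
  · refine Finset.sum_congr rfl fun d hd => ?_
    rw [Finset.sum_const, nsmul_eq_mul, mul_comm]
    congr 1
    have : Icc 1 n = Ioc 0 n := by rfl
    rw [this]
    norm_cast
    exact Nat.Ioc_filter_dvd_card_eq_div n d
  · intro x y
    simp only [mem_filter, mem_Icc]
    tauto


lemma Iic_eq_range (n : ℕ) : Iic n = range (n+1) :=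
  Finset.ext fun m => by simp [Nat.lt_succ_iff]

lemma prod_Icc_fact : ∀ n : ℕ, ∏ x ∈ Icc 1 n, x = n.factorial
  | 0 => rfl
  | n + 1 => by
    rw [Finset.prod_Icc_succ_top (Nat.le_add_left 1 n), prod_Icc_fact n,
      Nat.factorial_succ, Nat.mul_comm]

lemma log_fact_lower {n : ℕ} (hn : 1 ≤ n) :
    (n : ℝ) * Real.log n - n ≤ ∑ m ∈ Icc 1 n, Real.log m := by
  have hfac : ∑ m ∈ Icc 1 n, Real.log m = Real.log ((n.factorial : ℕ) : ℝ) := by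
    rw [← Real.log_prod (fun m hm => by
      simp only [mem_Icc] at hm
      have : 0 < m := hm.1
      positivity)]
    congr 1
    rw [← Nat.cast_prod, prod_Icc_fact n]
  have hf : (0:ℝ) < (n.factorial : ℝ) := by exact_mod_cast n.factorial_pos
  have h := Real.pow_div_factorial_le_exp (x := (n:ℝ)) (by positivity) n
  have hn' : (0:ℝ) < n := by exact_mod_cast hn
  have hlog := Real.log_le_log (by positivity) h
  rw [Real.log_div (by positivity) (ne_of_gt hf), Real.log_pow,
    Real.log_exp] at hlog
  rw [hfac]
  linarith

lemma log_fact_upper (n : ℕ) :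
    ∑ m ∈ Icc 1 n, Real.log m ≤ (n : ℝ) * Real.log n := by
  calc ∑ m ∈ Icc 1 n, Real.log m ≤ ∑ m ∈ Icc 1 n, Real.log n := by
        refine Finset.sum_le_sum fun m hm => ?_
        simp only [mem_Icc] at hm
        exact Real.log_le_log (by exact_mod_cast hm.1) (by exact_mod_cast hm.2)
    _ = (n : ℝ) * Real.log n := by
        rw [Finset.sum_const, Nat.card_Icc]
        simp [nsmul_eq_mul]

lemma theta_bound (n : ℕ) :
    ∑ p ∈ (Iic n).filter Nat.Prime, Real.log p ≤ (n : ℝ) * Real.log 4 := by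
  have h1 : ∑ p ∈ (Iic n).filter Nat.Prime, Real.log p
      = Real.log ((primorial n : ℕ) : ℝ) := by
    rw [← Real.log_prod (fun p hp => by
      simp only [mem_filter] at hp
      exact_mod_cast hp.2.pos.ne'), ← Nat.cast_prod]
    congr 2
    rw [primorial, Iic_eq_range]
  rw [h1]
  calc Real.log ((primorial n : ℕ) : ℝ) ≤ Real.log ((4 ^ n : ℕ) : ℝ) :=
        Real.log_le_log (by exact_mod_cast (primorial_pos n)) (by exact_mod_cast primorial_le_4_pow n)
    _ = (n : ℝ) * Real.log 4 := by push_cast; rw [Real.log_pow]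


noncomputable def C2 : ℝ := ∑' j : ℕ, 2 * Real.log j / (j:ℝ)^2

lemma F_nonneg (j : ℕ) : 0 ≤ 2 * Real.log j / (j:ℝ)^2 := by
  rcases Nat.eq_zero_or_pos j with h | h
  · simp [h]
  · have : (1:ℝ) ≤ j := by exact_mod_cast h
    have := Real.log_nonneg this
    positivity

lemma F_summable : Summable (fun j : ℕ => 2 * Real.log j / (j:ℝ)^2) := by
  have hs : Summable (fun j : ℕ => 4 * ((1:ℝ) / (j:ℝ)^(3/2 : ℝ))) :=
    (Real.summable_one_div_nat_rpow.mpr (by norm_num)).mul_left 4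
  refine Summable.of_nonneg_of_le F_nonneg (fun j => ?_) hs
  rcases Nat.eq_zero_or_pos j with h | h
  · simp [h]
  · have hj : (1:ℝ) ≤ (j:ℝ) := by exact_mod_cast h
    have hj0 : (0:ℝ) < j := by linarith
    have hlog : Real.log j ≤ (j:ℝ) ^ (1/2 : ℝ) / (1/2 : ℝ) :=
      Real.log_le_rpow_div (by positivity) (by norm_num)
    have hlog2 : Real.log j ≤ 2 * (j:ℝ) ^ (1/2 : ℝ) :=
      hlog.trans_eq (by ring)
    have h2 : ((j:ℝ)^2 : ℝ) = (j:ℝ) ^ (2:ℝ) := by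
      rw [← Real.rpow_natCast (j:ℝ) 2]; norm_num
    rw [div_le_iff₀ (show (0:ℝ) < (j:ℝ)^2 by positivity)]
    have key : 4 * ((1:ℝ)/(j:ℝ)^(3/2:ℝ)) * (j:ℝ)^2 = 4 * (j:ℝ)^(1/2:ℝ) := by
      rw [h2, one_div, ← Real.rpow_neg (le_of_lt hj0), mul_assoc,
        ← Real.rpow_add hj0]
      norm_num
    rw [key]
    nlinarith [Real.rpow_nonneg (le_of_lt hj0) (1/2:ℝ)]

lemma tail_bound (n : ℕ) :
    ∑ m ∈ (Icc 1 n).filter (fun m => ¬ m.Prime), Λ m / m ≤ C2 := by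
  set S' : Finset ℕ := (Icc 1 n).filter (fun m => ¬ m.Prime ∧ IsPrimePow m) with hS'
  have hstep1 : ∑ m ∈ (Icc 1 n).filter (fun m => ¬ m.Prime), Λ m / m
      = ∑ m ∈ S', Λ m / m := by
    refine (Finset.sum_subset (fun m hm => ?_) (fun m hm hm' => ?_)).symm
    · simp only [hS', mem_filter] at hm ⊢; tauto
    · simp only [hS', mem_filter, not_and, not_not] at hm hm'
      have := hm' hm.1 hm.2
      rw [vonMangoldt_eq_zero_iff.mpr this, zero_div]
  -- structure of elements of S'
  have hstruct : ∀ m ∈ S', ∃ p k : ℕ, p.Prime ∧ 2 ≤ k ∧ p ^ k = m := by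
    intro m hm
    simp only [hS', mem_filter] at hm
    obtain ⟨p, k, hp, hk, rfl⟩ := (isPrimePow_nat_iff m).mp hm.2.2
    refine ⟨p, k, hp, ?_, rfl⟩
    rcases Nat.lt_or_ge k 2 with h | h
    · exfalso
      have hk1 : k = 1 := by omega
      subst hk1
      simp only [pow_one] at hm
      exact hm.2.1 hp
    · exact h
  set φ : ℕ → ℕ × ℕ := fun m => (m.minFac, m.factorization m.minFac) with hφ
  have hφm : ∀ m ∈ S', (φ m).1 ^ (φ m).2 = m ∧ (φ m).1.Prime ∧ 2 ≤ (φ m).2 := by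
    intro m hm
    obtain ⟨p, k, hp, hk, rfl⟩ := hstruct m hm
    have h1 : (p ^ k).minFac = p := Nat.Prime.pow_minFac hp (by omega)
    have h2 : (p ^ k).factorization p = k := by
      rw [Nat.Prime.factorization_pow hp, Finsupp.single_eq_same]
    simp only [hφ, h1, h2]
    exact ⟨trivial, hp, hk⟩
  set g : ℕ × ℕ → ℝ := fun q => Real.log q.1 / (q.1:ℝ) ^ q.2 with hg
  have hval : ∀ m ∈ S', Λ m / m = g (φ m) := by
    intro m hm
    obtain ⟨hm1, hm2, hm3⟩ := hφm m hm
    have hΛ : Λ m = Real.log (φ m).1 := by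
      conv_lhs => rw [← hm1]
      rw [vonMangoldt_apply_pow (by omega), vonMangoldt_apply_prime hm2]
    rw [hΛ, hg]
    congr 1
    conv_lhs => rw [← hm1]
    push_cast
    rfl
  have hinj : Set.InjOn φ S' := by
    intro a ha b hb hab
    have h1 := (hφm a ha).1
    have h2 := (hφm b hb).1
    rw [← h1, ← h2, hab]
  set T : Finset (ℕ × ℕ) := ((Iic n).filter Nat.Prime) ×ˢ Icc 2 n with hT
  have himg : S'.image φ ⊆ T := by
    intro q hq
    simp only [Finset.mem_image] at hq
    obtain ⟨m, hm, rfl⟩ := hq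
    obtain ⟨h1, h2, h3⟩ := hφm m hm
    simp only [hS', mem_filter, mem_Icc] at hm
    simp only [hT, Finset.mem_product, mem_filter, mem_Iic, mem_Icc]
    refine ⟨⟨?_, h2⟩, h3, ?_⟩
    · calc (φ m).1 ≤ (φ m).1 ^ (φ m).2 := Nat.le_self_pow (by omega) _
        _ = m := h1
        _ ≤ n := hm.1.2
    · calc (φ m).2 ≤ 2 ^ (φ m).2 := Nat.le_of_lt Nat.lt_two_pow_self
        _ ≤ (φ m).1 ^ (φ m).2 := Nat.pow_le_pow_left h2.two_le _
        _ = m := h1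
        _ ≤ n := hm.1.2
  have hgnonneg : ∀ q ∈ T, 0 ≤ g q := by
    intro q hq
    simp only [hT, Finset.mem_product, mem_filter] at hq
    have h1 : (1:ℝ) ≤ q.1 := by exact_mod_cast hq.1.2.one_lt.le
    have := Real.log_nonneg h1
    positivity
  have hstep2 : ∑ m ∈ S', Λ m / m ≤ ∑ q ∈ T, g q := by
    rw [Finset.sum_congr rfl hval, ← Finset.sum_image (fun a ha b hb => hinj ha hb)]
    exact Finset.sum_le_sum_of_subset_of_nonneg himg (fun q hq _ => hgnonneg q hq)
  -- now bound sum over T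
  have hstep3 : ∑ q ∈ T, g q ≤ ∑ p ∈ (Iic n).filter Nat.Prime, 2 * Real.log p / (p:ℝ)^2 := by
    rw [hT, Finset.sum_product]
    refine Finset.sum_le_sum fun p hp => ?_
    simp only [mem_filter, mem_Iic] at hp
    have hp2 : (2:ℝ) ≤ p := by exact_mod_cast hp.2.two_le
    have hp0 : (0:ℝ) < p := by linarith
    have hlp : 0 ≤ Real.log p := Real.log_nonneg (by linarith)
    have hr : ((p:ℝ))⁻¹ ≤ 1/2 := by
      rw [inv_le_comm₀ hp0 (by norm_num)]; linarith
    have hr0 : (0:ℝ) ≤ (p:ℝ)⁻¹ := by positivity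
    calc ∑ k ∈ Icc 2 n, g (p, k) = Real.log p * ∑ k ∈ Icc 2 n, ((p:ℝ)⁻¹)^k := by
          rw [Finset.mul_sum]
          refine Finset.sum_congr rfl fun k _ => ?_
          simp only [hg, inv_pow]
          rw [div_eq_mul_inv]
      _ ≤ Real.log p * (2 * ((p:ℝ)⁻¹)^2) := by
          refine mul_le_mul_of_nonneg_left ?_ hlp
          -- geometric bound
          rcases Nat.lt_or_ge n 2 with h | h
          · rw [Finset.Icc_eq_empty (by omega), Finset.sum_empty]
            positivity
          · have : ∑ k ∈ Icc 2 n, ((p:ℝ)⁻¹)^k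
                = ∑ j ∈ range (n - 1), ((p:ℝ)⁻¹)^(j+2) := by
              refine Finset.sum_nbij' (fun k => k - 2) (fun j => j + 2) ?_ ?_ ?_ ?_ ?_
              · intro k hk; simp only [mem_Icc] at hk; simp only [mem_range]; omega
              · intro j hj; simp only [mem_range] at hj; simp only [mem_Icc]; omega
              · intro k hk; simp only [mem_Icc] at hk; show k - 2 + 2 = k; omega
              · intro j hj; show j + 2 - 2 = j; omega
              · intro k hk; simp only [mem_Icc] at hk; show _ = ((p:ℝ)⁻¹)^(k - 2 + 2); congr 1; omega
            rw [this]
            calc ∑ j ∈ range (n-1), ((p:ℝ)⁻¹)^(j+2)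
                = ((p:ℝ)⁻¹)^2 * ∑ j ∈ range (n-1), ((p:ℝ)⁻¹)^j := by
                  rw [Finset.mul_sum]
                  refine Finset.sum_congr rfl fun j _ => ?_
                  ring
              _ ≤ ((p:ℝ)⁻¹)^2 * 2 := by
                  refine mul_le_mul_of_nonneg_left ?_ (by positivity)
                  calc ∑ j ∈ range (n-1), ((p:ℝ)⁻¹)^j
                      ≤ ∑ j ∈ range (n-1), ((1:ℝ)/2)^j := by
                        refine Finset.sum_le_sum fun j _ => ?_
                        exact pow_le_pow_left₀ hr0 hr j
                    _ ≤ 2 := sum_geometric_two_le _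
              _ = 2 * ((p:ℝ)⁻¹)^2 := by ring
      _ = 2 * Real.log p / (p:ℝ)^2 := by
          rw [inv_pow]
          field_simp
  have hstep4 : ∑ p ∈ (Iic n).filter Nat.Prime, 2 * Real.log p / (p:ℝ)^2 ≤ C2 :=
    Summable.sum_le_tsum _ (fun j _ => F_nonneg j) F_summable
  linarith [hstep1, hstep2, hstep3, hstep4]

lemma C2_nonneg : 0 ≤ C2 := tsum_nonneg F_nonneg

/-- Mertens' first theorem: `∑_{p ≤ x} (log p)/p = log x + O(1)` for `x ≥ 2`. -/
theorem mertens_first :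
    ∃ C : ℝ, 0 < C ∧ ∀ x : ℝ, 2 ≤ x →
      |(∑ p ∈ (Finset.Iic ⌊x⌋₊).filter Nat.Prime, Real.log p / p) - Real.log x| ≤ C := by
  have hlog2' : 0 ≤ Real.log 2 := Real.log_nonneg (by norm_num)
  have hlog4' : 0 ≤ Real.log 4 := Real.log_nonneg (by norm_num)
  have hC2 := C2_nonneg
  refine ⟨1 + C2 + Real.log 4 + Real.log 2, by linarith, fun x hx => ?_⟩
  set n : ℕ := ⌊x⌋₊ with hn
  have hn2 : 2 ≤ n := Nat.le_floor (by exact_mod_cast hx)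
  have hn0 : (0:ℝ) < n := by exact_mod_cast (by omega : 0 < n)
  set P : ℝ := ∑ p ∈ (Iic n).filter Nat.Prime, Real.log p / p with hP
  -- the prime set
  have hPset : (Icc 1 n).filter Nat.Prime = (Iic n).filter Nat.Prime := by
    ext p
    simp only [mem_filter, mem_Icc, mem_Iic]
    constructor
    · rintro ⟨⟨_, h2⟩, hp⟩; exact ⟨h2, hp⟩
    · rintro ⟨h, hp⟩; exact ⟨⟨hp.pos, h⟩, hp⟩
  -- split the full sum
  have hsplit : ∑ m ∈ Icc 1 n, Real.log m
      = (∑ p ∈ (Iic n).filter Nat.Prime, Real.log p * ((n / p : ℕ) : ℝ))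
        + ∑ d ∈ (Icc 1 n).filter (fun d => ¬ d.Prime), Λ d * ((n / d : ℕ) : ℝ) := by
    rw [swap_sum, ← Finset.sum_filter_add_sum_filter_not (Icc 1 n) Nat.Prime, hPset]
    congr 1
    refine Finset.sum_congr rfl fun p hp => ?_
    simp only [mem_filter] at hp
    rw [vonMangoldt_apply_prime hp.2]
  set A : ℝ := ∑ p ∈ (Iic n).filter Nat.Prime, Real.log p * ((n / p : ℕ) : ℝ) with hA
  set B : ℝ := ∑ d ∈ (Icc 1 n).filter (fun d => ¬ d.Prime), Λ d * ((n / d : ℕ) : ℝ) with hB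
  have hB0 : 0 ≤ B := by
    refine Finset.sum_nonneg fun d _ => ?_
    exact mul_nonneg vonMangoldt_nonneg (Nat.cast_nonneg _)
  have hBle : B ≤ (n : ℝ) * C2 := by
    calc B ≤ ∑ d ∈ (Icc 1 n).filter (fun d => ¬ d.Prime), (n : ℝ) * (Λ d / d) := by
          refine Finset.sum_le_sum fun d hd => ?_
          simp only [mem_filter, mem_Icc] at hd
          have hd0 : (0:ℝ) < d := by exact_mod_cast hd.1.1
          calc Λ d * ((n / d : ℕ) : ℝ) ≤ Λ d * ((n:ℝ) / d) :=
                mul_le_mul_of_nonneg_left Nat.cast_div_le vonMangoldt_nonneg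
            _ = (n:ℝ) * (Λ d / d) := by field_simp
      _ = (n : ℝ) * ∑ d ∈ (Icc 1 n).filter (fun d => ¬ d.Prime), Λ d / d := by
          rw [Finset.mul_sum]
      _ ≤ (n : ℝ) * C2 := by
          exact mul_le_mul_of_nonneg_left (tail_bound n) (le_of_lt hn0)
  -- A ≤ n * P ≤ A + θ(n)
  have hAP : A ≤ (n:ℝ) * P := by
    rw [hP, Finset.mul_sum]
    refine Finset.sum_le_sum fun p hp => ?_
    simp only [mem_filter, mem_Iic] at hp
    have hp0 : (0:ℝ) < p := by exact_mod_cast hp.2.pos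
    have hlp : 0 ≤ Real.log p := Real.log_nonneg (by exact_mod_cast hp.2.one_lt.le)
    calc Real.log p * ((n / p : ℕ) : ℝ) ≤ Real.log p * ((n:ℝ)/p) :=
          mul_le_mul_of_nonneg_left Nat.cast_div_le hlp
      _ = (n:ℝ) * (Real.log p / p) := by field_simp
  have hPA : (n:ℝ) * P ≤ A + ∑ p ∈ (Iic n).filter Nat.Prime, Real.log p := by
    rw [hP, Finset.mul_sum, hA, ← Finset.sum_add_distrib]
    refine Finset.sum_le_sum fun p hp => ?_
    simp only [mem_filter, mem_Iic] at hp
    have hppos : 0 < p := hp.2.pos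
    have hp0 : (0:ℝ) < p := by exact_mod_cast hppos
    have hlp : 0 ≤ Real.log p := Real.log_nonneg (by exact_mod_cast hp.2.one_lt.le)
    have hdiv : (n:ℝ)/p ≤ ((n / p : ℕ) : ℝ) + 1 := by
      rw [div_le_iff₀ hp0]
      have h3 : n / p * p + n % p = n := Nat.div_add_mod' n p
      have h2 : n % p < p := Nat.mod_lt _ hppos
      have : n < (n / p + 1) * p := by
        have : (n / p + 1) * p = n / p * p + p := by ring
        omega
      calc (n:ℝ) ≤ (((n / p + 1) * p : ℕ) : ℝ) := by exact_mod_cast this.le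
        _ = (((n/p : ℕ):ℝ) + 1) * p := by push_cast; ring
    calc (n:ℝ) * (Real.log p / p) = Real.log p * ((n:ℝ)/p) := by field_simp
      _ ≤ Real.log p * (((n / p : ℕ) : ℝ) + 1) := mul_le_mul_of_nonneg_left hdiv hlp
      _ = Real.log p * ((n / p : ℕ) : ℝ) + Real.log p := by ring
  -- combine
  have hT1 := log_fact_lower (by omega : 1 ≤ n)
  have hT2 := log_fact_upper n
  have hθ := theta_bound n
  have hup : (n:ℝ) * P ≤ (n:ℝ) * Real.log n + (n:ℝ) * Real.log 4 := by
    have : A ≤ (n:ℝ) * Real.log n := by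
      have := hsplit
      nlinarith [hB0]
    linarith
  have hlow : (n:ℝ) * Real.log n - (n:ℝ) - (n:ℝ) * C2 ≤ (n:ℝ) * P := by
    have hA_low : (n:ℝ) * Real.log n - (n:ℝ) - (n:ℝ) * C2 ≤ A := by
      have := hsplit
      linarith
    linarith
  have hPup : P ≤ Real.log n + Real.log 4 := by
    have := (mul_le_mul_iff_right₀ hn0).mp (by linarith [hup] : (n:ℝ) * P ≤ (n:ℝ) * (Real.log n + Real.log 4))
    linarith
  have hPlow : Real.log n - 1 - C2 ≤ P := by
    have h := (mul_le_mul_iff_right₀ hn0).mp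
      (by linarith [hlow] : (n:ℝ) * (Real.log n - 1 - C2) ≤ (n:ℝ) * P)
    linarith
  -- relate log n and log x
  have hxn : (n:ℝ) ≤ x := Nat.floor_le (by linarith)
  have hxn1 : x < (n:ℝ) + 1 := Nat.lt_floor_add_one x
  have hlogxn : Real.log n ≤ Real.log x := Real.log_le_log hn0 hxn
  have hlogup : Real.log x ≤ Real.log n + Real.log 2 := by
    rw [add_comm, ← Real.log_mul (by norm_num : (2:ℝ) ≠ 0) (ne_of_gt hn0)]
    apply Real.log_le_log (by linarith)
    have : (n:ℝ) + 1 ≤ 2 * n := by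
      have : (1:ℝ) ≤ n := by exact_mod_cast (by omega : 1 ≤ n)
      linarith
    linarith
  have hlog2 : 0 ≤ Real.log 2 := Real.log_nonneg (by norm_num)
  have hlog4 : 0 ≤ Real.log 4 := Real.log_nonneg (by norm_num)
  rw [abs_le]
  constructor
  · have : Real.log x - (1 + C2 + Real.log 4 + Real.log 2) ≤ P := by
      have := C2_nonneg
      linarith
    linarith
  · linarith [hC2]
end

section
/- Let $k > 0$ and let $I_1, \dots, I_J$ be disjoint finite sets of primes with associated positive integers $\ell_1, \dots, \ell_J$. For each $j$ let $b_j(n) = 1$ if all prime factors of $n$ lie in $I_j$ and $\Omega(n) \le \ell_j$, and $b_j(n)=0$ otherwise. Suppose $\sum_{p \in I_j} 1/p \le \ell_j / (8ek)$ for each $j$. Then $\prod_{j=1}^J \Big(\sum_{n_j} \frac{k^{\Omega(n_j)}}{g(n_j)\, n_j} b_j(n_j)\Big) \ge \prod_{j=1}^J (1 - 2^{-\ell_j/2}) \prod_{p \in \cup_j I_j} e^{k/p}$, where $g$ is the multiplicative function with $g(p^r) = 1/r!$. -/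
open Real Finset

/-- The multiplicative function with `g(p^r) = 1/r!`. -/
noncomputable def gfun (n : ℕ) : ℝ :=
  ∏ p ∈ n.primeFactors, (1 : ℝ) / (Nat.factorial (n.factorization p) : ℝ)

lemma gfun_eq_prod_of_subset {n : ℕ} {S : Finset ℕ} (h : n.primeFactors ⊆ S) :
    gfun n = ∏ p ∈ S, (1 : ℝ) / (Nat.factorial (n.factorization p) : ℝ) := by
  rw [gfun]
  refine Finset.prod_subset h fun p _ hp ↦ ?_
  have h0 : n.factorization p = 0 := by
    rwa [← Finsupp.notMem_support_iff, Nat.support_factorization]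
  simp [h0]

lemma gfun_pos (n : ℕ) : 0 < gfun n := by
  apply Finset.prod_pos
  intro p _
  positivity

lemma gfun_le_one (n : ℕ) : gfun n ≤ 1 := by
  apply Finset.prod_le_one
  · intro p _; positivity
  · intro p _
    rw [div_le_one (by positivity)]
    exact_mod_cast Nat.one_le_iff_ne_zero.mpr (Nat.factorial_ne_zero _)

lemma gfun_mul {m n : ℕ} (hm : m ≠ 0) (hn : n ≠ 0) (h : Nat.Coprime m n) :
    gfun (m * n) = gfun m * gfun n := by
  have hpf : (m * n).primeFactors = m.primeFactors ∪ n.primeFactors :=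
    Nat.primeFactors_mul hm hn
  rw [gfun_eq_prod_of_subset (S := m.primeFactors ∪ n.primeFactors) (by rw [hpf]),
    gfun_eq_prod_of_subset (S := m.primeFactors ∪ n.primeFactors) Finset.subset_union_left,
    gfun_eq_prod_of_subset (S := m.primeFactors ∪ n.primeFactors) Finset.subset_union_right,
    ← Finset.prod_mul_distrib]
  refine Finset.prod_congr rfl fun p hp ↦ ?_
  have hdisj := Nat.Coprime.disjoint_primeFactors h
  rw [Nat.factorization_mul hm hn, Finsupp.add_apply]
  by_cases hpm : p ∈ m.primeFactors
  · have h0 : n.factorization p = 0 := by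
      rw [← Finsupp.notMem_support_iff, Nat.support_factorization]
      exact Finset.disjoint_left.mp hdisj hpm
    simp [h0]
  · have h0 : m.factorization p = 0 := by
      rwa [← Finsupp.notMem_support_iff, Nat.support_factorization]
    simp [h0]

noncomputable def ff (c : ℝ) (n : ℕ) : ℝ :=
  if n = 0 then 0 else c ^ n.primeFactorsList.length * gfun n / n

lemma ff_one (c : ℝ) : ff c 1 = 1 := by
  simp [ff, gfun]

lemma ff_nonneg {c : ℝ} (hc : 0 ≤ c) (n : ℕ) : 0 ≤ ff c n := by
  rw [ff]
  split
  · exact le_rfl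
  · exact div_nonneg (mul_nonneg (pow_nonneg hc _) (gfun_pos n).le) (Nat.cast_nonneg _)

lemma ff_mul (c : ℝ) {m n : ℕ} (h : Nat.Coprime m n) : ff c (m * n) = ff c m * ff c n := by
  rcases eq_or_ne m 0 with rfl | hm
  · have := Nat.coprime_zero_left n |>.mp h
    subst this
    simp [ff]
  rcases eq_or_ne n 0 with rfl | hn
  · have := Nat.coprime_zero_right m |>.mp h
    subst this
    simp [ff]
  have hmn : m * n ≠ 0 := mul_ne_zero hm hn
  have hlen : (m * n).primeFactorsList.length =
      m.primeFactorsList.length + n.primeFactorsList.length := by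
    rw [(Nat.perm_primeFactorsList_mul hm hn).length_eq, List.length_append]
  rw [ff, ff, ff, if_neg hmn, if_neg hm, if_neg hn, hlen, gfun_mul hm hn h, pow_add,
    Nat.cast_mul]
  field_simp

lemma ff_prime_pow {c : ℝ} {p : ℕ} (hp : p.Prime) (r : ℕ) :
    ff c (p ^ r) = (c / p) ^ r / (Nat.factorial r : ℝ) := by
  have hp0 : (p : ℝ) ≠ 0 := Nat.cast_ne_zero.mpr hp.pos.ne'
  have hpr : p ^ r ≠ 0 := pow_ne_zero _ hp.pos.ne'
  have hlen : (p ^ r).primeFactorsList.length = r := by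
    rw [hp.primeFactorsList_pow, List.length_replicate]
  have hg : gfun (p ^ r) = 1 / (Nat.factorial r : ℝ) := by
    rcases Nat.eq_zero_or_pos r with rfl | hr
    · simp [gfun]
    · rw [gfun, Nat.primeFactors_prime_pow hr.ne' hp]
      simp [hp.factorization_pow]
  rw [ff, if_neg hpr, hlen, hg, div_pow, Nat.cast_pow]
  ring

lemma hasSum_ff {c : ℝ} (hc : 0 < c) (I : Finset ℕ) (hI : ∀ p ∈ I, p.Prime) :
    HasSum (Set.indicator (Nat.factoredNumbers I) (ff c))
      (∏ p ∈ I, Real.exp (c / p)) := by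
  have hps : ∀ {p : ℕ}, p.Prime → HasSum (fun r : ℕ ↦ ff c (p ^ r)) (Real.exp (c / p)) := by
    intro p hp
    have hfe : (fun r : ℕ ↦ ff c (p ^ r)) = fun r : ℕ ↦ (c / p) ^ r / (Nat.factorial r : ℝ) :=
      funext (ff_prime_pow hp)
    rw [hfe, Real.exp_eq_exp_ℝ]
    exact NormedSpace.expSeries_div_hasSum_exp ((c : ℝ) / p)
  have hsumnorm : ∀ {p : ℕ}, p.Prime → Summable (fun r : ℕ ↦ ‖ff c (p ^ r)‖) := by
    intro p hp
    exact ((hps hp).summable).congr fun r ↦ (Real.norm_of_nonneg (ff_nonneg hc.le _)).symm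
  have key := EulerProduct.summable_and_hasSum_factoredNumbers_prod_filter_prime_tsum
    (f := ff c) (ff_one c) (fun {m n} h ↦ ff_mul c h) hsumnorm I
  have h3 : HasSum (fun m : Nat.factoredNumbers I ↦ ff c m) (∏ p ∈ I, Real.exp (c / p)) := by
    have h4 := key.2
    rwa [Finset.filter_true_of_mem hI,
      Finset.prod_congr rfl (fun p hp ↦ (hps (hI p hp)).tsum_eq)] at h4
  rwa [← hasSum_subtype_iff_indicator]

lemma key_bound (k : ℝ) (hk : 0 < k) (I : Finset ℕ) (hI : ∀ p ∈ I, p.Prime) (ℓ : ℕ)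
    (hℓ : 1 ≤ ℓ) (hs : ∑ p ∈ I, (1 : ℝ) / p ≤ (ℓ : ℝ) / (8 * Real.exp 1 * k)) :
    (1 - (2 : ℝ) ^ (-(ℓ : ℝ) / 2)) * ∏ p ∈ I, Real.exp (k / p) ≤
      ∑' n : {n : ℕ // 0 < n ∧ (∀ p ∈ n.primeFactors, p ∈ I) ∧
          n.primeFactorsList.length ≤ ℓ},
        k ^ (n : ℕ).primeFactorsList.length / (gfun n * (n : ℕ)) := by
  classical
  set A : Set ℕ := {n | 0 < n ∧ (∀ p ∈ n.primeFactors, p ∈ I) ∧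
    n.primeFactorsList.length ≤ ℓ} with hA
  set B : Set ℕ := {n | 0 < n ∧ (∀ p ∈ n.primeFactors, p ∈ I) ∧
    ℓ < n.primeFactorsList.length} with hB
  have hmem : ∀ n : ℕ, n ∈ Nat.factoredNumbers I ↔
      0 < n ∧ ∀ p ∈ n.primeFactors, p ∈ I := by
    intro n
    simp only [Nat.mem_factoredNumbers, ← Nat.mem_primeFactors_iff_mem_primeFactorsList,
      Nat.pos_iff_ne_zero]
  have hIle : A ∪ B = Nat.factoredNumbers I := by
    ext n
    rw [Set.mem_union, hmem n, hA, hB]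
    simp only [Set.mem_setOf_eq]
    rcases le_or_gt n.primeFactorsList.length ℓ with h | h <;> tauto
  have hdisjAB : Disjoint A B := by
    rw [Set.disjoint_left]
    rintro n ⟨_, _, h1⟩ ⟨_, _, h2⟩
    omega
  -- finiteness of A
  have hAfin : A.Finite := by
    apply Set.Finite.subset (Set.finite_Iic ((∏ p ∈ I, p) ^ ℓ))
    rintro n ⟨hn, hsub, hlen⟩
    have hdvd : n ∣ ∏ p ∈ I, p ^ ℓ := by
      have h1 : n = ∏ q ∈ n.primeFactors, q ^ n.factorization q := by
        conv_lhs => rw [← Nat.factorization_prod_pow_eq_self hn.ne']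
        rw [Finsupp.prod, Nat.support_factorization]
      rw [h1]
      refine dvd_trans (Finset.prod_dvd_prod_of_dvd _ _ fun q hq ↦ ?_)
        (Finset.prod_dvd_prod_of_subset _ _ _ hsub)
      refine pow_dvd_pow q ?_
      calc n.factorization q = n.primeFactorsList.count q :=
            (Nat.primeFactorsList_count_eq).symm
        _ ≤ n.primeFactorsList.length := List.count_le_length
        _ ≤ ℓ := hlen
    rw [Set.mem_Iic, ← Finset.prod_pow]
    exact Nat.le_of_dvd (Finset.prod_pos fun p hp ↦ pow_pos (hI p hp).pos ℓ) hdvd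
  haveI : Finite ↥A := hAfin.to_subtype
  set term : ℕ → ℝ := fun n ↦ k ^ n.primeFactorsList.length / (gfun n * n) with hterm
  -- sums
  have hHk := hasSum_ff hk I hI
  have hH2 := hasSum_ff (by linarith : (0:ℝ) < 2 * k) I hI
  have hsumA : Summable (A.indicator (ff k)) := by
    refine summable_of_ne_finset_zero (s := hAfin.toFinset) fun n hn ↦ ?_
    rw [Set.Finite.mem_toFinset] at hn
    exact Set.indicator_of_notMem hn _
  have hsumTermA : Summable (A.indicator term) := by
    refine summable_of_ne_finset_zero (s := hAfin.toFinset) fun n hn ↦ ?_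
    rw [Set.Finite.mem_toFinset] at hn
    exact Set.indicator_of_notMem hn _
  have hsumB : Summable (B.indicator (ff k)) := by
    have heq : B.indicator (ff k) =
        Set.indicator (Nat.factoredNumbers I) (ff k) - A.indicator (ff k) := by
      rw [← hIle, Set.indicator_union_of_disjoint hdisjAB]
      ext n; simp
    rw [heq]
    exact hHk.summable.sub hsumA
  -- split identity
  have hsplit : ∑' n, A.indicator (ff k) n + ∑' n, B.indicator (ff k) n =
      ∏ p ∈ I, Real.exp (k / p) := by
    rw [← hHk.tsum_eq, ← hsumA.tsum_add hsumB]
    refine tsum_congr fun n ↦ ?_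
    rw [← hIle, Set.indicator_union_of_disjoint hdisjAB]
  -- tail bound
  have htail : ∑' n, B.indicator (ff k) n ≤
      (∏ p ∈ I, Real.exp (2 * k / p)) / 2 ^ ℓ := by
    rw [← hH2.tsum_eq, ← tsum_div_const]
    refine hsumB.tsum_le_tsum (fun n ↦ ?_) (hH2.summable.div_const _)
    by_cases hn : n ∈ B
    · have hnB := hn
      obtain ⟨hn0, hsub, hlen⟩ := hn
      have hnf : n ∈ Nat.factoredNumbers I := by
        rw [← hIle]; exact Or.inr ⟨hn0, hsub, hlen⟩
      rw [Set.indicator_of_mem hnB, Set.indicator_of_mem hnf]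
      have hne : n ≠ 0 := hn0.ne'
      rw [ff, if_neg hne, ff, if_neg hne, mul_pow,
        le_div_iff₀ (by positivity : (0:ℝ) < (2:ℝ) ^ ℓ)]
      have hg := gfun_pos n
      have hnpos : (0:ℝ) < (n:ℝ) := Nat.cast_pos.mpr hn0
      have h2 : (2:ℝ) ^ ℓ ≤ 2 ^ n.primeFactorsList.length :=
        pow_le_pow_right₀ one_le_two hlen.le
      have hbase : 0 ≤ k ^ n.primeFactorsList.length * gfun n / (n:ℝ) := by positivity
      calc k ^ n.primeFactorsList.length * gfun n / (n:ℝ) * 2 ^ ℓ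
          = 2 ^ ℓ * (k ^ n.primeFactorsList.length * gfun n / (n:ℝ)) := by ring
        _ ≤ 2 ^ n.primeFactorsList.length *
            (k ^ n.primeFactorsList.length * gfun n / (n:ℝ)) :=
              mul_le_mul_of_nonneg_right h2 hbase
        _ = 2 ^ n.primeFactorsList.length * k ^ n.primeFactorsList.length * gfun n / (n:ℝ) := by
              ring
    · rw [Set.indicator_of_notMem hn]
      exact div_nonneg (Set.indicator_nonneg (fun m _ ↦ ff_nonneg (by linarith) m) n)
        (by positivity)
  -- comparison between ff k and term on A
  have hptle : ∀ n, A.indicator (ff k) n ≤ A.indicator term n := by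
    intro n
    by_cases hn : n ∈ A
    · have hnA := hn
      obtain ⟨hn0, -, -⟩ := hn
      rw [Set.indicator_of_mem hnA, Set.indicator_of_mem hnA]
      have hne : n ≠ 0 := hn0.ne'
      have hg := gfun_pos n
      have hg1 := gfun_le_one n
      have hnpos : (0:ℝ) < (n:ℝ) := Nat.cast_pos.mpr hn0
      have hkL : (0:ℝ) < k ^ n.primeFactorsList.length := pow_pos hk _
      simp only [hterm]
      rw [ff, if_neg hne, div_le_div_iff₀ (by positivity) (by positivity)]
      have hgg : gfun n * gfun n ≤ 1 := by nlinarith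
      calc k ^ n.primeFactorsList.length * gfun n * (gfun n * (n:ℝ))
          = (gfun n * gfun n) * (k ^ n.primeFactorsList.length * (n:ℝ)) := by ring
        _ ≤ 1 * (k ^ n.primeFactorsList.length * (n:ℝ)) :=
            mul_le_mul_of_nonneg_right hgg (by positivity)
        _ = k ^ n.primeFactorsList.length * (n:ℝ) := one_mul _
    · rw [Set.indicator_of_notMem hn, Set.indicator_of_notMem hn]
  have hAle : ∑' n, A.indicator (ff k) n ≤ ∑' n, A.indicator term n :=
    hsumA.tsum_le_tsum hptle hsumTermA
  -- scalar estimates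
  have hk0 : k ≠ 0 := hk.ne'
  have he0 : Real.exp 1 ≠ 0 := (Real.exp_pos 1).ne'
  set σ : ℝ := ∑ p ∈ I, (1:ℝ)/p with hσ
  have hsum1 : ∑ p ∈ I, k / (p:ℝ) = k * σ := by
    rw [hσ, Finset.mul_sum]
    exact Finset.sum_congr rfl fun p _ ↦ by ring
  have hsum2 : ∑ p ∈ I, 2 * k / (p:ℝ) = k * σ + k * σ := by
    rw [← hsum1, ← Finset.sum_add_distrib]
    exact Finset.sum_congr rfl fun p _ ↦ by ring
  have hP : ∏ p ∈ I, Real.exp (k / (p:ℝ)) = Real.exp (k * σ) := by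
    rw [← Real.exp_sum, hsum1]
  have hQ : ∏ p ∈ I, Real.exp (2 * k / (p:ℝ)) = Real.exp (k * σ) * Real.exp (k * σ) := by
    rw [← Real.exp_sum, hsum2, Real.exp_add]
  have hkσ : k * σ ≤ (ℓ:ℝ) / (8 * Real.exp 1) := by
    have h := mul_le_mul_of_nonneg_left hs hk.le
    rwa [show k * ((ℓ:ℝ) / (8 * Real.exp 1 * k)) = (ℓ:ℝ)/(8*Real.exp 1) from by
      field_simp] at h
  have hexp : Real.exp (k * σ) ≤ (2:ℝ) ^ ((ℓ:ℝ)/2) := by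
    rw [Real.rpow_def_of_pos two_pos]
    apply Real.exp_le_exp.mpr
    have h4 : (1:ℝ) ≤ Real.log 2 * Real.exp 1 * 4 := by
      nlinarith [Real.log_two_gt_d9, Real.exp_one_gt_d9]
    have hl2 : (ℓ:ℝ)/(8*Real.exp 1) ≤ Real.log 2 * ((ℓ:ℝ)/2) := by
      rw [div_le_iff₀ (by positivity)]
      nlinarith [mul_le_mul_of_nonneg_left h4 (Nat.cast_nonneg ℓ : (0:ℝ) ≤ (ℓ:ℝ))]
    exact hkσ.trans hl2
  have hkey : (∏ p ∈ I, Real.exp (2 * k / (p:ℝ))) / 2 ^ ℓ ≤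
      (2:ℝ) ^ (-(ℓ:ℝ)/2) * ∏ p ∈ I, Real.exp (k / (p:ℝ)) := by
    rw [hQ, hP]
    set E := Real.exp (k * σ) with hE
    set R := (2:ℝ) ^ ((ℓ:ℝ)/2) with hR
    have hEpos : 0 < E := Real.exp_pos _
    have hRpos : 0 < R := Real.rpow_pos_of_pos two_pos _
    have hpow2 : ((2:ℝ) ^ ℓ : ℝ) = R * R := by
      rw [hR, ← Real.rpow_natCast 2 ℓ, ← Real.rpow_add two_pos]
      congr 1
      ring
    have hneg : (2:ℝ) ^ (-(ℓ:ℝ)/2) * R = 1 := by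
      rw [hR, ← Real.rpow_add two_pos]
      rw [show -(ℓ:ℝ)/2 + (ℓ:ℝ)/2 = 0 from by ring, Real.rpow_zero]
    rw [hpow2, div_le_iff₀ (by positivity)]
    calc E * E ≤ E * R := by nlinarith
      _ = (2:ℝ) ^ (-(ℓ:ℝ)/2) * E * (R * R) := by
          rw [show (2:ℝ) ^ (-(ℓ:ℝ)/2) * E * (R * R) = E * R * ((2:ℝ) ^ (-(ℓ:ℝ)/2) * R)
            from by ring, hneg, mul_one]
  -- conversion of the goal
  have hconv : (∑' n : {n : ℕ // 0 < n ∧ (∀ p ∈ n.primeFactors, p ∈ I) ∧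
      n.primeFactorsList.length ≤ ℓ},
        k ^ (n : ℕ).primeFactorsList.length / (gfun n * (n : ℕ))) =
      ∑' n : ℕ, A.indicator term n := tsum_subtype A term
  rw [hconv]
  have hx : (2:ℝ) ^ (-(ℓ:ℝ)/2) * ∏ p ∈ I, Real.exp (k / (p:ℝ)) ≥ 0 := by positivity
  have hexpand : (1 - (2:ℝ) ^ (-(ℓ:ℝ)/2)) * ∏ p ∈ I, Real.exp (k / (p:ℝ)) =
      (∏ p ∈ I, Real.exp (k / (p:ℝ))) - (2:ℝ) ^ (-(ℓ:ℝ)/2) * ∏ p ∈ I, Real.exp (k / (p:ℝ)) := by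
    ring
  linarith [hAle, hsplit, htail, hkey]


/-- Lower bound for a product of truncated Euler-type sums via Rankin's trick. -/
theorem product_truncated_sums_lower_bound (k : ℝ) (hk : 0 < k) (J : ℕ)
    (I : Fin J → Finset ℕ) (hI : ∀ j, ∀ p ∈ I j, p.Prime)
    (hdisj : ∀ j j' : Fin J, j ≠ j' → Disjoint (I j) (I j'))
    (ℓ : Fin J → ℕ) (hℓ : ∀ j, 1 ≤ ℓ j)
    (hsum : ∀ j, ∑ p ∈ I j, (1 : ℝ) / p ≤ (ℓ j : ℝ) / (8 * Real.exp 1 * k)) :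
    (∏ j : Fin J, (1 - (2 : ℝ) ^ (-(ℓ j : ℝ) / 2))) *
        ∏ p ∈ Finset.univ.biUnion I, Real.exp (k / p) ≤
      ∏ j : Fin J,
        ∑' n : {n : ℕ // 0 < n ∧ (∀ p ∈ n.primeFactors, p ∈ I j) ∧
            n.primeFactorsList.length ≤ ℓ j},
          k ^ (n : ℕ).primeFactorsList.length / (gfun n * (n : ℕ)) := by
  have hprod : ∏ p ∈ Finset.univ.biUnion I, Real.exp (k / p) =
      ∏ j : Fin J, ∏ p ∈ I j, Real.exp (k / p) :=
    Finset.prod_biUnion fun j _ j' _ hjj' ↦ hdisj j j' hjj'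
  rw [hprod, ← Finset.prod_mul_distrib]
  refine Finset.prod_le_prod (fun j _ ↦ ?_) fun j _ ↦
    key_bound k hk (I j) (hI j) (ℓ j) (hℓ j) (hsum j)
  have h1 : (2:ℝ) ^ (-(ℓ j : ℝ)/2) ≤ 1 := by
    apply Real.rpow_le_one_of_one_le_of_nonpos one_le_two
    have : (0:ℝ) ≤ (ℓ j : ℝ) := Nat.cast_nonneg _
    linarith
  have h2 : (0:ℝ) ≤ ∏ p ∈ I j, Real.exp (k / p) :=
    Finset.prod_nonneg fun p _ ↦ (Real.exp_pos _).le
  exact mul_nonneg (by linarith) h2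
end
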